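/- Let C, C₁, C₂, … be Archimedean copulas with (normalized, right-continuous at 0) generators φ, φ₁, φ₂, …, respectively. Then C_n(x,y) → C(x,y) for all x,y ∈ [0,1] if, and only if, φ_n(x) → φ(x) for all x ∈ (0,1]. -/

import Mathlib

open MeasureTheory Filter Set
open scoped ENNReal

noncomputable section

/-- Right-hand derivative (of a convex function on `[0,1]`) of `f` at `x`, realized as the
infimum of the forward difference quotients with right endpoint in `(x, 1]`. -/
noncomputable def rightD (f : ℝ → ℝ) (x : ℝ) : ℝ :=
  sInf ((fun y => (f y - f x) / (y - x)) '' Set.Ioc x 1)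

/-- `φ : [0,1] → [0,∞]` is a (normalized, right-continuous at `0`) generator of an
Archimedean copula: convex, strictly decreasing, `φ 1 = 0`, finite on `(0,1]`,
right-continuous at `0` and normalized by `φ (1/2) = 1`. -/
structure IsGenerator (φ : ℝ → ℝ≥0∞) : Prop where
  convex : ∀ x ∈ Set.Icc (0:ℝ) 1, ∀ y ∈ Set.Icc (0:ℝ) 1, ∀ t ∈ Set.Icc (0:ℝ) 1,
    φ (t * x + (1 - t) * y) ≤ ENNReal.ofReal t * φ x + ENNReal.ofReal (1 - t) * φ y
  strict_anti : ∀ x ∈ Set.Icc (0:ℝ) 1, ∀ y ∈ Set.Icc (0:ℝ) 1, x < y → φ y < φ x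
  map_one : φ 1 = 0
  finite : ∀ x ∈ Set.Ioc (0:ℝ) 1, φ x < ⊤
  rightCont_zero : Filter.Tendsto φ (nhdsWithin 0 (Set.Ioi 0)) (nhds (φ 0))
  normalized : φ (1/2) = 1

/-- Pseudo-inverse `φ⁻` of a generator: `φ⁻ s = φ⁻¹ s` for `s < φ 0` and `0` for `s ≥ φ 0`. -/
noncomputable def pseudoInv (φ : ℝ → ℝ≥0∞) (s : ℝ≥0∞) : ℝ :=
  sSup {x | x ∈ Set.Icc (0:ℝ) 1 ∧ s ≤ φ x}

/-- The Archimedean copula generated by `φ`: `C(x,y) = φ⁻(φ x + φ y)`. -/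
noncomputable def archCopula (φ : ℝ → ℝ≥0∞) (x y : ℝ) : ℝ :=
  pseudoInv φ (φ x + φ y)

/-- The right-hand derivative `D⁺φ` of a generator. -/
noncomputable def Dplus (φ : ℝ → ℝ≥0∞) (x : ℝ) : ℝ :=
  rightD (fun t => (φ t).toReal) x

/-- The set `Cont(D⁺φ)` of continuity points of `D⁺φ` in `(0,1)`. -/
def ContD (φ : ℝ → ℝ≥0∞) : Set ℝ :=
  {x | x ∈ Set.Ioo (0:ℝ) 1 ∧ ContinuousAt (Dplus φ) x}

/-- The `t`-level function `f^t(x) = φ⁻(φ t − φ x)` of the Archimedean copula generated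
by `φ`. -/
noncomputable def levelFn (φ : ℝ → ℝ≥0∞) (t x : ℝ) : ℝ :=
  pseudoInv φ (φ t - φ x)

/-- The Kendall distribution function `F^Kendall(x) = x − φ(x)/D⁺φ(x)` of the Archimedean
copula generated by `φ`. -/
noncomputable def kendall (φ : ℝ → ℝ≥0∞) (x : ℝ) : ℝ :=
  x - (φ x).toReal / Dplus φ x

/-- The Markov kernel (as conditional distribution function `(x,y) ↦ K_C(x,[0,y])`) of the
Archimedean copula generated by `φ`. -/
noncomputable def archKernel (φ : ℝ → ℝ≥0∞) (x y : ℝ) : ℝ :=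
  if x = 0 ∨ x = 1 then 1
  else if y < levelFn φ 0 x then 0
  else Dplus φ x / Dplus φ (archCopula φ x y)

/-- The metric `D₁` between two copulas, expressed via their conditional distribution
functions `K₁, K₂` (with `Kᵢ x y = K_{Cᵢ}(x,[0,y])`). -/
noncomputable def D1 (K1 K2 : ℝ → ℝ → ℝ) : ℝ :=
  ∫ y in Set.Icc (0:ℝ) 1, ∫ x in Set.Icc (0:ℝ) 1, |K1 x y - K2 x y|

/-- Conditional distribution function of the independence copula `Π`. -/
def piKernel : ℝ → ℝ → ℝ := fun _ y => y

/-- Dependence measure `ζ₁(C) = 3 D₁(C, Π)`. -/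
noncomputable def zeta1 (K : ℝ → ℝ → ℝ) : ℝ := 3 * D1 K piKernel

/-- Dependence measure `r(C) = 6 ∫∫ K_C(x,[0,y])² dλ(x) dλ(y) − 2`. -/
noncomputable def rdep (K : ℝ → ℝ → ℝ) : ℝ :=
  6 * (∫ y in Set.Icc (0:ℝ) 1, ∫ x in Set.Icc (0:ℝ) 1, (K x y) ^ 2) - 2

/-- Weak conditional convergence of a sequence of copulas, in terms of their conditional
distribution functions: for λ-a.e. `x ∈ [0,1]` the measures `K_{C_n}(x,·)` converge weakly
to `K_C(x,·)`, i.e. the conditional distribution functions converge at every continuity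
point of `y ↦ K_C(x,[0,y])` in `[0,1]`. -/
def WeakCondConv (Kseq : ℕ → ℝ → ℝ → ℝ) (K : ℝ → ℝ → ℝ) : Prop :=
  ∀ᵐ x ∂(volume.restrict (Set.Icc (0:ℝ) 1)),
    ∀ y ∈ Set.Icc (0:ℝ) 1, ContinuousWithinAt (fun t => K x t) (Set.Icc 0 1) y →
      Filter.Tendsto (fun n => Kseq n x y) Filter.atTop (nhds (K x y))

namespace ArchAux

variable {φ : ℝ → ℝ≥0∞}

lemma mem_Icc_of_Ioc {x : ℝ} (h : x ∈ Set.Ioc (0:ℝ) 1) : x ∈ Set.Icc (0:ℝ) 1 :=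
  ⟨h.1.le, h.2⟩

lemma anti (hφ : IsGenerator φ) {x y : ℝ} (hx : x ∈ Set.Icc (0:ℝ) 1)
    (hy : y ∈ Set.Icc (0:ℝ) 1) (hxy : x ≤ y) : φ y ≤ φ x := by
  rcases eq_or_lt_of_le hxy with rfl | h
  · exact le_rfl
  · exact (hφ.strict_anti x hx y hy h).le

lemma ne_top (hφ : IsGenerator φ) {x : ℝ} (hx : x ∈ Set.Ioc (0:ℝ) 1) : φ x ≠ ⊤ :=
  (hφ.finite x hx).ne

lemma one_lt_phi_zero (hφ : IsGenerator φ) : 1 < φ 0 := by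
  have := hφ.strict_anti 0 ⟨le_rfl, zero_le_one⟩ (1/2) ⟨by norm_num, by norm_num⟩ (by norm_num)
  rwa [hφ.normalized] at this

lemma lt_phi_zero (hφ : IsGenerator φ) {x : ℝ} (hx : x ∈ Set.Ioc (0:ℝ) 1) : φ x < φ 0 :=
  hφ.strict_anti 0 ⟨le_rfl, zero_le_one⟩ x (mem_Icc_of_Ioc hx) hx.1

lemma convexOn_toReal (hφ : IsGenerator φ) {a : ℝ} (ha : 0 < a) (_ha1 : a ≤ 1) :
    ConvexOn ℝ (Set.Icc a 1) (fun z => (φ z).toReal) := by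
  refine ⟨convex_Icc _ _, fun x hx y hy p q hp hq hpq => ?_⟩
  have hx' : x ∈ Set.Ioc (0:ℝ) 1 := ⟨lt_of_lt_of_le ha hx.1, hx.2⟩
  have hy' : y ∈ Set.Ioc (0:ℝ) 1 := ⟨lt_of_lt_of_le ha hy.1, hy.2⟩
  have hp1 : p ≤ 1 := by linarith
  have key := hφ.convex x ⟨hx'.1.le, hx'.2⟩ y ⟨hy'.1.le, hy'.2⟩ p ⟨hp, hp1⟩
  rw [show (1:ℝ) - p = q by linarith] at key
  have hfx := ne_top hφ hx'
  have hfy := ne_top hφ hy'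
  have hm1 : ENNReal.ofReal p * φ x ≠ ⊤ := ENNReal.mul_ne_top ENNReal.ofReal_ne_top hfx
  have hm2 : ENNReal.ofReal q * φ y ≠ ⊤ := ENNReal.mul_ne_top ENNReal.ofReal_ne_top hfy
  have hne : ENNReal.ofReal p * φ x + ENNReal.ofReal q * φ y ≠ ⊤ :=
    ENNReal.add_ne_top.2 ⟨hm1, hm2⟩
  have h2 := ENNReal.toReal_mono hne key
  rw [ENNReal.toReal_add hm1 hm2, ENNReal.toReal_mul, ENNReal.toReal_mul,
    ENNReal.toReal_ofReal hp, ENNReal.toReal_ofReal hq] at h2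
  simpa [smul_eq_mul] using h2

lemma contOn (hφ : IsGenerator φ) : ContinuousOn φ (Set.Icc 0 1) := by
  intro x hx
  rcases eq_or_lt_of_le hx.1 with h0 | hx0
  · -- x = 0
    have hsub : Set.Icc (0:ℝ) 1 ⊆ {0} ∪ Set.Ioi 0 := by
      intro z hz
      rcases eq_or_lt_of_le hz.1 with h | h
      · exact Or.inl h.symm
      · exact Or.inr h
    rw [ContinuousWithinAt, ← h0]
    refine Filter.Tendsto.mono_left ?_ (nhdsWithin_mono _ hsub)
    rw [nhdsWithin_union, nhdsWithin_singleton]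
    exact tendsto_sup.2 ⟨tendsto_pure_nhds φ 0, hφ.rightCont_zero⟩
  rcases eq_or_lt_of_le hx.2 with h1 | hx1
  · -- x = 1
    rw [ContinuousWithinAt, h1, hφ.map_one]
    have hup : ∀ᶠ z in nhdsWithin 1 (Set.Icc (0:ℝ) 1), φ z ≤ ENNReal.ofReal (2 * (1 - z)) := by
      filter_upwards [eventually_mem_nhdsWithin,
        (eventually_gt_nhds (by norm_num : (1:ℝ)/2 < 1)).filter_mono nhdsWithin_le_nhds]
        with z hz hz2
      have ht0 : 0 ≤ 2 * (1 - z) := by linarith [hz.2]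
      have ht1 : 2 * (1 - z) ≤ 1 := by linarith
      have key := hφ.convex (1/2) (by norm_num) 1 (by norm_num) (2 * (1-z)) ⟨ht0, ht1⟩
      rw [hφ.normalized, hφ.map_one, mul_zero, add_zero, mul_one] at key
      rw [show (2*(1-z)) * (1/2) + (1 - 2*(1-z)) = z by ring] at key
      simpa using key
    have hupt : Filter.Tendsto (fun z => ENNReal.ofReal (2 * (1 - z)))
        (nhdsWithin 1 (Set.Icc (0:ℝ) 1)) (nhds 0) := by
      have h := (ENNReal.continuous_ofReal.comp (by continuity :
        Continuous fun z : ℝ => 2 * (1 - z))).tendsto 1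
      simp only [Function.comp] at h
      have h' := h.mono_left (nhdsWithin_le_nhds (s := Set.Icc (0:ℝ) 1))
      simpa [Function.comp_def] using h'
    exact tendsto_of_tendsto_of_tendsto_of_le_of_le' tendsto_const_nhds hupt
      (Filter.Eventually.of_forall fun z => zero_le) hup
  · -- 0 < x < 1
    have ha : (0:ℝ) < x/2 := by linarith
    have hconv := convexOn_toReal hφ ha (by linarith)
    have hioo : x ∈ Set.Ioo (x/2) 1 := ⟨by linarith, hx1⟩
    have hcg : ContinuousAt (fun z => (φ z).toReal) x := by
      have h := hconv.continuousOn_interior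
      rw [interior_Icc] at h
      exact h.continuousAt (Ioo_mem_nhds hioo.1 hioo.2)
    have heq : (fun z => ENNReal.ofReal ((φ z).toReal)) =ᶠ[nhds x] φ := by
      filter_upwards [Ioo_mem_nhds hioo.1 hioo.2] with z hz
      exact ENNReal.ofReal_toReal (ne_top hφ ⟨lt_trans ha hz.1, hz.2.le⟩)
    exact ((ENNReal.continuous_ofReal.continuousAt.comp hcg).congr heq).continuousWithinAt

lemma exists_eq (hφ : IsGenerator φ) {s : ℝ≥0∞} (hs : s < φ 0) :
    ∃ x ∈ Set.Ioc (0:ℝ) 1, φ x = s := by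
  have h1 : ∀ᶠ t in nhdsWithin (0:ℝ) (Set.Ioi 0), s < φ t :=
    hφ.rightCont_zero.eventually (eventually_gt_nhds hs)
  have h2 : ∀ᶠ t in nhdsWithin (0:ℝ) (Set.Ioi 0), t < 1 :=
    (eventually_lt_nhds (by norm_num : (0:ℝ) < 1)).filter_mono nhdsWithin_le_nhds
  obtain ⟨t, hst, ht1, ht0⟩ := (h1.and (h2.and eventually_mem_nhdsWithin)).exists
  have ht0' : (0:ℝ) < t := ht0
  have hiv := intermediate_value_Icc' (le_of_lt ht1) ((contOn hφ).mono
    (Set.Icc_subset_Icc ht0'.le le_rfl))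
  rw [hφ.map_one] at hiv
  obtain ⟨x, hxmem, hxeq⟩ := hiv ⟨zero_le, hst.le⟩
  exact ⟨x, ⟨lt_of_lt_of_le ht0' hxmem.1, hxmem.2⟩, hxeq⟩

lemma pI_bddAbove (φ : ℝ → ℝ≥0∞) (s : ℝ≥0∞) :
    BddAbove {x | x ∈ Set.Icc (0:ℝ) 1 ∧ s ≤ φ x} :=
  (bddAbove_Icc (a := (0:ℝ)) (b := 1)).mono fun _ hx => hx.1

lemma pI_nonneg (φ : ℝ → ℝ≥0∞) (s : ℝ≥0∞) : 0 ≤ pseudoInv φ s :=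
  Real.sSup_nonneg fun _ hx => hx.1.1

lemma pI_le_one (φ : ℝ → ℝ≥0∞) (s : ℝ≥0∞) : pseudoInv φ s ≤ 1 :=
  Real.sSup_le (fun _ hx => hx.1.2) zero_le_one

lemma pI_mem (φ : ℝ → ℝ≥0∞) (s : ℝ≥0∞) : pseudoInv φ s ∈ Set.Icc (0:ℝ) 1 :=
  ⟨pI_nonneg φ s, pI_le_one φ s⟩

lemma le_pI {x : ℝ} {s : ℝ≥0∞} (hx : x ∈ Set.Icc (0:ℝ) 1) (hs : s ≤ φ x) :
    x ≤ pseudoInv φ s :=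
  le_csSup (pI_bddAbove φ s) ⟨hx, hs⟩

lemma pI_anti (φ : ℝ → ℝ≥0∞) {s t : ℝ≥0∞} (h : s ≤ t) : pseudoInv φ t ≤ pseudoInv φ s :=
  Real.sSup_le (fun x hx => le_csSup (pI_bddAbove φ s) ⟨hx.1, le_trans h hx.2⟩)
    (pI_nonneg φ s)

lemma pI_phi (hφ : IsGenerator φ) {x : ℝ} (hx : x ∈ Set.Icc (0:ℝ) 1) :
    pseudoInv φ (φ x) = x := by
  have hset : {y | y ∈ Set.Icc (0:ℝ) 1 ∧ φ x ≤ φ y} = Set.Icc 0 x := by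
    ext y
    constructor
    · rintro ⟨hy, hle⟩
      refine ⟨hy.1, ?_⟩
      by_contra h
      push_neg at h
      exact absurd hle (not_le.2 (hφ.strict_anti x hx y hy h))
    · intro hy
      have hy' : y ∈ Set.Icc (0:ℝ) 1 := ⟨hy.1, le_trans hy.2 hx.2⟩
      exact ⟨hy', anti hφ hy' hx hy.2⟩
  rw [pseudoInv, hset, csSup_Icc hx.1]

lemma pI_zero_of_ge (hφ : IsGenerator φ) {s : ℝ≥0∞} (hs : φ 0 ≤ s) : pseudoInv φ s = 0 := by
  have hb : ∀ x ∈ {x | x ∈ Set.Icc (0:ℝ) 1 ∧ s ≤ φ x}, x ≤ 0 := by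
    rintro x ⟨hx, hsx⟩
    by_contra h
    push_neg at h
    exact absurd (le_trans hs hsx)
      (not_le.2 (hφ.strict_anti 0 ⟨le_rfl, zero_le_one⟩ x hx h))
  exact le_antisymm (Real.sSup_le hb le_rfl) (pI_nonneg φ s)

lemma phi_pI (hφ : IsGenerator φ) {s : ℝ≥0∞} (hs : s < φ 0) :
    φ (pseudoInv φ s) = s := by
  obtain ⟨x, hx, hxeq⟩ := exists_eq hφ hs
  rw [← hxeq, pI_phi hφ (mem_Icc_of_Ioc hx)]

lemma pI_pos (hφ : IsGenerator φ) {s : ℝ≥0∞} (hs : s < φ 0) : 0 < pseudoInv φ s := by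
  obtain ⟨x, hx, hxeq⟩ := exists_eq hφ hs
  rw [← hxeq, pI_phi hφ (mem_Icc_of_Ioc hx)]
  exact hx.1

lemma pI_lt (hφ : IsGenerator φ) {x : ℝ} {s : ℝ≥0∞} (hx : x ∈ Set.Ioc (0:ℝ) 1)
    (h : φ x < s) : pseudoInv φ s < x := by
  rcases lt_or_ge s (φ 0) with hs | hs
  · by_contra hc
    push_neg at hc
    have hle := anti hφ (mem_Icc_of_Ioc hx) (pI_mem φ s) hc
    rw [phi_pI hφ hs] at hle
    exact absurd h (not_lt.2 hle)
  · rw [pI_zero_of_ge hφ hs]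
    exact hx.1

lemma lt_pI (hφ : IsGenerator φ) {x : ℝ} {s : ℝ≥0∞} (hx : x ∈ Set.Icc (0:ℝ) 1)
    (h : s < φ x) : x < pseudoInv φ s := by
  have hs0 : s < φ 0 := lt_of_lt_of_le h (anti hφ ⟨le_rfl, zero_le_one⟩ hx hx.1)
  by_contra hc
  push_neg at hc
  have hle := anti hφ (pI_mem φ s) hx hc
  rw [phi_pI hφ hs0] at hle
  exact absurd h (not_lt.2 hle)

lemma pI_cont (hφ : IsGenerator φ) : Continuous (pseudoInv φ) := by
  rw [continuous_iff_continuousAt]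
  intro s
  rw [ContinuousAt, tendsto_order]
  constructor
  · intro c hc
    rcases lt_or_ge c 0 with hc0 | hc0
    · exact Filter.Eventually.of_forall fun t => lt_of_lt_of_le hc0 (pI_nonneg _ _)
    · have hne : {x | x ∈ Set.Icc (0:ℝ) 1 ∧ s ≤ φ x}.Nonempty := by
        by_contra h
        rw [Set.not_nonempty_iff_eq_empty] at h
        rw [pseudoInv, h, Real.sSup_empty] at hc
        exact absurd hc (not_lt.2 hc0)
      obtain ⟨u, hu, hcu⟩ := exists_lt_of_lt_csSup hne hc
      obtain ⟨u', hcu', huu'⟩ := exists_between hcu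
      have hu'mem : u' ∈ Set.Icc (0:ℝ) 1 := ⟨le_trans hc0 hcu'.le, le_trans huu'.le hu.1.2⟩
      have hphi : s < φ u' := lt_of_le_of_lt hu.2 (hφ.strict_anti u' hu'mem u hu.1 huu')
      filter_upwards [eventually_lt_nhds hphi] with t ht
      exact lt_of_lt_of_le hcu' (le_csSup (pI_bddAbove φ t) ⟨hu'mem, ht.le⟩)
  · intro c hc
    rcases lt_or_ge 1 c with hc1 | hc1
    · exact Filter.Eventually.of_forall fun t => lt_of_le_of_lt (pI_le_one _ _) hc1
    · obtain ⟨c', hc', hcc'⟩ := exists_between hc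
      have hc'mem : c' ∈ Set.Icc (0:ℝ) 1 :=
        ⟨le_trans (pI_nonneg φ s) hc'.le, le_trans hcc'.le hc1⟩
      have hphi : φ c' < s := by
        by_contra h
        push_neg at h
        exact absurd (le_csSup (pI_bddAbove φ s) ⟨hc'mem, h⟩) (not_le.2 hc')
      filter_upwards [eventually_gt_nhds hphi] with t ht
      refine lt_of_le_of_lt (Real.sSup_le ?_ (le_trans (pI_nonneg φ s) hc'.le)) hcc'
      rintro v ⟨hv, hsv⟩
      by_contra hvc
      push_neg at hvc
      have hlt := hφ.strict_anti c' hc'mem v hv hvc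
      exact absurd hsv (not_le.2 (lt_trans hlt ht))

lemma arch_pI (hφ : IsGenerator φ) (s t : ℝ≥0∞) :
    archCopula φ (pseudoInv φ s) (pseudoInv φ t) = pseudoInv φ (s + t) := by
  rcases lt_or_ge s (φ 0) with hs | hs
  · rcases lt_or_ge t (φ 0) with ht | ht
    · rw [archCopula, phi_pI hφ hs, phi_pI hφ ht]
    · rw [archCopula, pI_zero_of_ge hφ ht, pI_zero_of_ge hφ (le_add_self : φ 0 ≤ _ + φ 0),
        pI_zero_of_ge hφ (le_trans ht (le_add_self : t ≤ s + t))]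
  · rw [archCopula, pI_zero_of_ge hφ hs,
      pI_zero_of_ge hφ (self_le_add_right (φ 0) _ : φ 0 ≤ φ 0 + _),
      pI_zero_of_ge hφ (le_trans hs (self_le_add_right s t))]

lemma arch_mono (hφ : IsGenerator φ) {x x' y y' : ℝ} (hx : x ∈ Set.Icc (0:ℝ) 1)
    (hx' : x' ∈ Set.Icc (0:ℝ) 1) (hy : y ∈ Set.Icc (0:ℝ) 1) (hy' : y' ∈ Set.Icc (0:ℝ) 1)
    (hxx : x ≤ x') (hyy : y ≤ y') : archCopula φ x y ≤ archCopula φ x' y' :=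
  pI_anti φ (add_le_add (anti hφ hx hx' hxx) (anti hφ hy hy' hyy))

lemma arch_zero_left (hφ : IsGenerator φ) (y : ℝ) : archCopula φ 0 y = 0 :=
  pI_zero_of_ge hφ (self_le_add_right (φ 0) (φ y))

lemma arch_zero_right (hφ : IsGenerator φ) (x : ℝ) : archCopula φ x 0 = 0 :=
  pI_zero_of_ge hφ (le_add_self : φ 0 ≤ φ x + φ 0)

lemma arch_contOn (hφ : IsGenerator φ) :
    ContinuousOn (fun p : ℝ × ℝ => archCopula φ p.1 p.2)
      (Set.Icc (0:ℝ) 1 ×ˢ Set.Icc (0:ℝ) 1) := by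
  have h1 : ContinuousOn (fun p : ℝ × ℝ => φ p.1 + φ p.2)
      (Set.Icc (0:ℝ) 1 ×ˢ Set.Icc (0:ℝ) 1) :=
    (((contOn hφ).comp continuousOn_fst fun p hp => hp.1).add
      ((contOn hφ).comp continuousOn_snd fun p hp => hp.2))
  exact (pI_cont hφ).comp_continuousOn h1

/-- Convergence of pseudo-inverses along a convergent sequence of arguments, from
pointwise convergence of the generators on `(0,1]`. -/
lemma inv_conv (hφ : IsGenerator φ) (ψ : ℕ → ℝ → ℝ≥0∞) (hψ : ∀ n, IsGenerator (ψ n))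
    (hconv : ∀ x ∈ Set.Ioc (0:ℝ) 1,
      Filter.Tendsto (fun n => ψ n x) Filter.atTop (nhds (φ x)))
    {sq : ℕ → ℝ≥0∞} {s : ℝ≥0∞} (hs : Filter.Tendsto sq Filter.atTop (nhds s)) :
    Filter.Tendsto (fun n => pseudoInv (ψ n) (sq n)) Filter.atTop
      (nhds (pseudoInv φ s)) := by
  rw [tendsto_order]
  constructor
  · intro c hc
    rcases lt_or_ge c 0 with hc0 | hc0
    · exact Filter.Eventually.of_forall fun n => lt_of_lt_of_le hc0 (pI_nonneg _ _)
    · have hne : {x | x ∈ Set.Icc (0:ℝ) 1 ∧ s ≤ φ x}.Nonempty := by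
        by_contra h
        rw [Set.not_nonempty_iff_eq_empty] at h
        rw [pseudoInv, h, Real.sSup_empty] at hc
        exact absurd hc (not_lt.2 hc0)
      obtain ⟨u, hu, hcu⟩ := exists_lt_of_lt_csSup hne hc
      obtain ⟨u', hcu', huu'⟩ := exists_between hcu
      have hu'mem : u' ∈ Set.Icc (0:ℝ) 1 := ⟨le_trans hc0 hcu'.le, le_trans huu'.le hu.1.2⟩
      have hphi : s < φ u' := lt_of_le_of_lt hu.2 (hφ.strict_anti u' hu'mem u hu.1 huu')
      obtain ⟨m, hm1, hm2⟩ := exists_between hphi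
      have hu'Ioc : u' ∈ Set.Ioc (0:ℝ) 1 := ⟨lt_of_le_of_lt hc0 hcu', hu'mem.2⟩
      have he1 := (tendsto_order.1 hs).2 m hm1
      have he2 := (tendsto_order.1 (hconv u' hu'Ioc)).1 m hm2
      filter_upwards [he1, he2] with n h1 h2
      exact lt_of_lt_of_le hcu'
        (le_csSup (pI_bddAbove _ _) ⟨hu'mem, (lt_trans h1 h2).le⟩)
  · intro c hc
    rcases lt_or_ge 1 c with hc1 | hc1
    · exact Filter.Eventually.of_forall fun n => lt_of_le_of_lt (pI_le_one _ _) hc1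
    · obtain ⟨u, hu1, hu2⟩ := exists_between hc
      have hu0 : 0 < u := lt_of_le_of_lt (pI_nonneg φ s) hu1
      have humem : u ∈ Set.Icc (0:ℝ) 1 := ⟨hu0.le, le_trans hu2.le hc1⟩
      have hphi : φ u < s := by
        by_contra h
        push_neg at h
        exact absurd (le_csSup (pI_bddAbove φ s) ⟨humem, h⟩) (not_le.2 hu1)
      obtain ⟨m, hm1, hm2⟩ := exists_between hphi
      have he1 := (tendsto_order.1 hs).1 m hm2
      have he2 := (tendsto_order.1 (hconv u ⟨hu0, humem.2⟩)).2 m hm1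
      filter_upwards [he1, he2] with n h1 h2
      refine lt_of_le_of_lt (Real.sSup_le ?_ hu0.le) hu2
      rintro v ⟨hv, hsv⟩
      by_contra hvu
      push_neg at hvu
      have hlt := (hψ n).strict_anti u humem v hv hvu
      exact absurd hsv (not_le.2 (lt_trans (lt_trans hlt h2) h1))

/-- Convergence of the copulas at moving points, from pointwise convergence and
monotonicity, using continuity of the limit copula. -/
lemma mov (hφ : IsGenerator φ) (ψ : ℕ → ℝ → ℝ≥0∞) (hψ : ∀ k, IsGenerator (ψ k))
    (H : ∀ x ∈ Set.Icc (0:ℝ) 1, ∀ y ∈ Set.Icc (0:ℝ) 1,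
      Filter.Tendsto (fun k => archCopula (ψ k) x y) Filter.atTop
        (nhds (archCopula φ x y)))
    {xk yk : ℕ → ℝ} {a b : ℝ} (ha : a ∈ Set.Icc (0:ℝ) 1) (hb : b ∈ Set.Icc (0:ℝ) 1)
    (hxk : ∀ k, xk k ∈ Set.Icc (0:ℝ) 1) (hyk : ∀ k, yk k ∈ Set.Icc (0:ℝ) 1)
    (hxa : Filter.Tendsto xk Filter.atTop (nhds a))
    (hyb : Filter.Tendsto yk Filter.atTop (nhds b)) :
    Filter.Tendsto (fun k => archCopula (ψ k) (xk k) (yk k)) Filter.atTop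
      (nhds (archCopula φ a b)) := by
  have hF : ContinuousWithinAt (fun p : ℝ × ℝ => archCopula φ p.1 p.2)
      (Set.Icc (0:ℝ) 1 ×ˢ Set.Icc (0:ℝ) 1) (a, b) :=
    (arch_contOn hφ) (a, b) (Set.mk_mem_prod ha hb)
  rw [tendsto_order]
  constructor
  · intro c hc
    rcases lt_or_ge c 0 with hc0 | hc0
    · exact Filter.Eventually.of_forall fun k => lt_of_lt_of_le hc0 (pI_nonneg _ _)
    · have ha0 : 0 < a := by
        rcases eq_or_lt_of_le ha.1 with h | h
        · rw [← h, arch_zero_left hφ] at hc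
          exact absurd hc (not_lt.2 hc0)
        · exact h
      have hb0 : 0 < b := by
        rcases eq_or_lt_of_le hb.1 with h | h
        · rw [← h, arch_zero_right hφ] at hc
          exact absurd hc (not_lt.2 hc0)
        · exact h
      have hmem : ∀ u : ℝ, 0 < u → u < min a b →
          (a - u, b - u) ∈ Set.Icc (0:ℝ) 1 ×ˢ Set.Icc (0:ℝ) 1 := by
        intro u hu hum
        refine Set.mk_mem_prod ⟨?_, ?_⟩ ⟨?_, ?_⟩
        · linarith [lt_of_lt_of_le hum (min_le_left a b)]
        · linarith [ha.2]
        · linarith [lt_of_lt_of_le hum (min_le_right a b)]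
        · linarith [hb.2]
      have hpath : Filter.Tendsto (fun u : ℝ => (a - u, b - u))
          (nhdsWithin 0 (Set.Ioi 0))
          (nhdsWithin (a, b) (Set.Icc (0:ℝ) 1 ×ˢ Set.Icc (0:ℝ) 1)) := by
        rw [tendsto_nhdsWithin_iff]
        constructor
        · have hco : Filter.Tendsto (fun u : ℝ => (a - u, b - u)) (nhds 0)
              (nhds (a - 0, b - 0)) :=
            ((continuous_const.sub continuous_id).prodMk
              (continuous_const.sub continuous_id)).tendsto 0
          simp only [sub_zero] at hco
          exact hco.mono_left nhdsWithin_le_nhds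
        · filter_upwards [eventually_mem_nhdsWithin,
            (eventually_lt_nhds (lt_min ha0 hb0)).filter_mono nhdsWithin_le_nhds]
            with u hu hum
          exact hmem u hu hum
      have hev := (((tendsto_order.1 (Filter.Tendsto.comp hF hpath)).1 c hc).and
        (eventually_mem_nhdsWithin.and
          ((eventually_lt_nhds (lt_min ha0 hb0)).filter_mono nhdsWithin_le_nhds))).exists
      obtain ⟨u, hcu, hu0, hum⟩ := hev
      have hau : a - u ∈ Set.Icc (0:ℝ) 1 := (hmem u hu0 hum).1
      have hbu : b - u ∈ Set.Icc (0:ℝ) 1 := (hmem u hu0 hum).2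
      have hxev := (tendsto_order.1 hxa).1 (a - u) (sub_lt_self a hu0)
      have hyev := (tendsto_order.1 hyb).1 (b - u) (sub_lt_self b hu0)
      have hCev := (tendsto_order.1 (H (a - u) hau (b - u) hbu)).1 c hcu
      filter_upwards [hxev, hyev, hCev] with k h1 h2 h3
      exact lt_of_lt_of_le h3
        (arch_mono (hψ k) hau (hxk k) hbu (hyk k) h1.le h2.le)
  · intro c hc
    have hmem : ∀ u : ℝ, 0 < u →
        (min (a + u) 1, min (b + u) 1) ∈ Set.Icc (0:ℝ) 1 ×ˢ Set.Icc (0:ℝ) 1 := by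
      intro u hu
      exact Set.mk_mem_prod ⟨le_min (by linarith [ha.1]) zero_le_one, min_le_right _ _⟩
        ⟨le_min (by linarith [hb.1]) zero_le_one, min_le_right _ _⟩
    have hpath : Filter.Tendsto (fun u : ℝ => (min (a + u) 1, min (b + u) 1))
        (nhdsWithin 0 (Set.Ioi 0))
        (nhdsWithin (a, b) (Set.Icc (0:ℝ) 1 ×ˢ Set.Icc (0:ℝ) 1)) := by
      rw [tendsto_nhdsWithin_iff]
      constructor
      · have hco : Filter.Tendsto (fun u : ℝ => (min (a + u) 1, min (b + u) 1)) (nhds 0)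
            (nhds (min (a + 0) 1, min (b + 0) 1)) :=
          (((continuous_const.add continuous_id).min continuous_const).prodMk
            ((continuous_const.add continuous_id).min continuous_const)).tendsto 0
        rw [add_zero, add_zero, min_eq_left ha.2, min_eq_left hb.2] at hco
        exact hco.mono_left nhdsWithin_le_nhds
      · filter_upwards [eventually_mem_nhdsWithin] with u hu
        exact hmem u hu
    have hev := (((tendsto_order.1 (Filter.Tendsto.comp hF hpath)).2 c hc).and
      eventually_mem_nhdsWithin).exists
    obtain ⟨u, hcu, hu0⟩ := hev
    have hau : min (a + u) 1 ∈ Set.Icc (0:ℝ) 1 := (hmem u hu0).1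
    have hbu : min (b + u) 1 ∈ Set.Icc (0:ℝ) 1 := (hmem u hu0).2
    have hxev := (tendsto_order.1 hxa).2 (a + u) (lt_add_of_pos_right a hu0)
    have hyev := (tendsto_order.1 hyb).2 (b + u) (lt_add_of_pos_right b hu0)
    have hCev := (tendsto_order.1 (H _ hau _ hbu)).2 c hcu
    filter_upwards [hxev, hyev, hCev] with k h1 h2 h3
    refine lt_of_le_of_lt
      (arch_mono (hψ k) (hxk k) hau (hyk k) hbu ?_ ?_) h3
    · exact le_min h1.le (hxk k).2
    · exact le_min h2.le (hyk k).2

/-- Dyadic rationals of the form `(k+1)/2^m` are dense in `ℝ≥0∞`. -/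
lemma dyadic_between {a b : ℝ≥0∞} (hab : a < b) :
    ∃ k m : ℕ, a < ((k : ℝ≥0∞) + 1) * ((2:ℝ≥0∞)^m)⁻¹ ∧
      ((k : ℝ≥0∞) + 1) * ((2:ℝ≥0∞)^m)⁻¹ < b := by
  have hat : a ≠ ⊤ := hab.ne_top
  rcases eq_or_ne b ⊤ with rfl | hbt
  · obtain ⟨n, hn⟩ := ENNReal.exists_nat_gt hat
    refine ⟨n, 0, ?_, ?_⟩
    · rw [pow_zero, inv_one, mul_one]
      exact lt_of_lt_of_le hn (le_add_of_nonneg_right zero_le_one)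
    · rw [pow_zero, inv_one, mul_one]
      exact ENNReal.add_lt_top.2 ⟨ENNReal.natCast_lt_top n, ENNReal.one_lt_top⟩
  · have hR : a.toReal < b.toReal := (ENNReal.toReal_lt_toReal hat hbt).2 hab
    have haR : (0:ℝ) ≤ a.toReal := ENNReal.toReal_nonneg
    obtain ⟨m, hm⟩ := exists_pow_lt_of_lt_one (sub_pos.2 hR) (by norm_num : (1:ℝ)/2 < 1)
    have h2m : (0:ℝ) < 2^m := by positivity
    set k := ⌊a.toReal * 2^m⌋₊ with hk
    have hk1 : a.toReal < ((k:ℝ) + 1) / 2^m := by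
      rw [lt_div_iff₀ h2m]
      exact Nat.lt_floor_add_one _
    have hk2 : ((k:ℝ) + 1) / 2^m < b.toReal := by
      have hfl : (k:ℝ) ≤ a.toReal * 2^m := Nat.floor_le (by positivity)
      have hpow : (1/2:ℝ)^m = (2^m)⁻¹ := by
        rw [one_div, inv_pow]
      rw [div_lt_iff₀ h2m]
      rw [hpow] at hm
      have h1 : (1:ℝ) < (b.toReal - a.toReal) * 2^m := by
        have h2 := mul_lt_mul_of_pos_right hm h2m
        rwa [inv_mul_cancel₀ h2m.ne'] at h2
      nlinarith
    have hcast : ((k : ℝ≥0∞) + 1) * ((2:ℝ≥0∞)^m)⁻¹ =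
        ENNReal.ofReal (((k:ℝ) + 1) / 2^m) := by
      rw [ENNReal.ofReal_div_of_pos h2m, div_eq_mul_inv]
      congr 1
      · rw [ENNReal.ofReal_add (by positivity) zero_le_one]
        simp
      · rw [show ((2:ℝ)^m) = ((2:ℝ≥0∞)^m).toReal by simp,
          ENNReal.ofReal_toReal (by simp)]
    refine ⟨k, m, ?_, ?_⟩
    · rw [hcast]
      exact (ENNReal.lt_ofReal_iff_toReal_lt hat).2 hk1
    · rw [hcast]
      exact (ENNReal.ofReal_lt_iff_lt_toReal (by positivity) hbt).2 hk2

end ArchAux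

/-- For Archimedean copulas, pointwise convergence of the copulas on
`[0,1]²` is equivalent to pointwise convergence of the generators on `(0,1]`. -/
theorem stmt1 (φ : ℝ → ℝ≥0∞) (φseq : ℕ → ℝ → ℝ≥0∞)
    (hφ : IsGenerator φ) (hφseq : ∀ n, IsGenerator (φseq n)) :
    (∀ x ∈ Set.Icc (0:ℝ) 1, ∀ y ∈ Set.Icc (0:ℝ) 1,
        Filter.Tendsto (fun n => archCopula (φseq n) x y) Filter.atTop
          (nhds (archCopula φ x y)))
      ↔ (∀ x ∈ Set.Ioc (0:ℝ) 1,
          Filter.Tendsto (fun n => φseq n x) Filter.atTop (nhds (φ x))) := by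
  constructor
  · -- copulas converge ⇒ generators converge
    intro H
    set A : ℝ≥0∞ → Prop := fun s =>
      Filter.Tendsto (fun n => pseudoInv (φseq n) s) Filter.atTop (nhds (pseudoInv φ s))
      with hAdef
    have h1 : A 1 := by
      have hv : ∀ ψ : ℝ → ℝ≥0∞, IsGenerator ψ → pseudoInv ψ 1 = 1/2 := by
        intro ψ hψ
        rw [← hψ.normalized, ArchAux.pI_phi hψ (by norm_num)]
      have he : (fun n => pseudoInv (φseq n) 1) = fun _ => (1:ℝ)/2 :=
        funext fun n => hv _ (hφseq n)
      show Filter.Tendsto _ _ _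
      rw [he, hv φ hφ]
      exact tendsto_const_nhds
    have hadd : ∀ s t : ℝ≥0∞, A s → A t → A (s + t) := by
      intro s t hs ht
      have hm := ArchAux.mov hφ φseq hφseq H (ArchAux.pI_mem φ s) (ArchAux.pI_mem φ t)
        (fun n => ArchAux.pI_mem _ s) (fun n => ArchAux.pI_mem _ t) hs ht
      rw [ArchAux.arch_pI hφ s t] at hm
      exact hm.congr fun n => ArchAux.arch_pI (hφseq n) s t
    have hhalf : ∀ s : ℝ≥0∞, s < φ 0 → A s → A (s / 2) := by
      intro s hslt hs
      apply Filter.tendsto_of_subseq_tendsto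
      intro ns hns
      obtain ⟨v, hv, ms, hms, htend⟩ := IsCompact.tendsto_subseq
        (isCompact_Icc : IsCompact (Set.Icc (0:ℝ) 1))
        (fun i => ArchAux.pI_mem (φseq (ns i)) (s / 2))
      have hsub : Filter.Tendsto (fun i => ns (ms i)) Filter.atTop Filter.atTop :=
        hns.comp hms.tendsto_atTop
      have htend' : Filter.Tendsto (fun i => pseudoInv (φseq (ns (ms i))) (s / 2))
          Filter.atTop (nhds v) := htend
      have H' : ∀ x ∈ Set.Icc (0:ℝ) 1, ∀ y ∈ Set.Icc (0:ℝ) 1,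
          Filter.Tendsto (fun i => archCopula (φseq (ns (ms i))) x y) Filter.atTop
            (nhds (archCopula φ x y)) :=
        fun x hx y hy => (H x hx y hy).comp hsub
      have hm := ArchAux.mov hφ (fun i => φseq (ns (ms i))) (fun i => hφseq _) H'
        hv hv (fun _ => ArchAux.pI_mem _ _) (fun _ => ArchAux.pI_mem _ _) htend' htend'
      have heq : ∀ i, archCopula (φseq (ns (ms i))) (pseudoInv (φseq (ns (ms i))) (s/2))
          (pseudoInv (φseq (ns (ms i))) (s/2)) = pseudoInv (φseq (ns (ms i))) s := by
        intro i
        rw [ArchAux.arch_pI (hφseq _) (s/2) (s/2), ENNReal.add_halves]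
      have hm2 : Filter.Tendsto (fun i => pseudoInv (φseq (ns (ms i))) s) Filter.atTop
          (nhds (archCopula φ v v)) := hm.congr heq
      have hm3 : Filter.Tendsto (fun i => pseudoInv (φseq (ns (ms i))) s) Filter.atTop
          (nhds (pseudoInv φ s)) := hs.comp hsub
      have hCvv : archCopula φ v v = pseudoInv φ s := tendsto_nhds_unique hm2 hm3
      have hspos : 0 < pseudoInv φ s := ArchAux.pI_pos hφ hslt
      have hlt : φ v + φ v < φ 0 := by
        by_contra h
        push_neg at h
        rw [archCopula, ArchAux.pI_zero_of_ge hφ h] at hCvv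
        exact hspos.ne' hCvv.symm
      have heq2 : φ v + φ v = s := by
        have hA1 := ArchAux.phi_pI hφ hlt
        have hA2 := ArchAux.phi_pI hφ hslt
        rw [archCopula] at hCvv
        rw [← hA1, hCvv, hA2]
      have hv2 : φ v = s / 2 :=
        (ENNReal.eq_div_iff (by norm_num) (by norm_num)).2 (by rw [two_mul]; exact heq2)
      have hveq : v = pseudoInv φ (s/2) := by rw [← hv2, ArchAux.pI_phi hφ hv]
      exact ⟨ms, hveq ▸ htend'⟩
    have hdy2 : ∀ m : ℕ, A ((2:ℝ≥0∞)^m)⁻¹ := by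
      intro m
      induction m with
      | zero => simpa using h1
      | succ m ih =>
        have hle1 : ((2:ℝ≥0∞)^m)⁻¹ ≤ 1 := by
          rw [ENNReal.inv_le_one]
          exact one_le_pow_of_one_le' (by norm_num : (1:ℝ≥0∞) ≤ 2) m
        have hlt : ((2:ℝ≥0∞)^m)⁻¹ < φ 0 :=
          lt_of_le_of_lt hle1 (ArchAux.one_lt_phi_zero hφ)
        have hh := hhalf _ hlt ih
        have hE : ((2:ℝ≥0∞)^m)⁻¹ / 2 = ((2:ℝ≥0∞)^(m+1))⁻¹ := by
          rw [pow_succ, ENNReal.mul_inv (Or.inl (by positivity)) (Or.inl (by simp)),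
            div_eq_mul_inv]
        rwa [hE] at hh
    have hdyadic : ∀ k m : ℕ, A (((k:ℝ≥0∞) + 1) * ((2:ℝ≥0∞)^m)⁻¹) := by
      intro k m
      induction k with
      | zero => simpa using hdy2 m
      | succ k ih =>
        have hE : (((k+1:ℕ):ℝ≥0∞) + 1) = ((k:ℝ≥0∞) + 1) + 1 := by push_cast; ring
        rw [hE, add_mul, one_mul]
        exact hadd _ _ ih (hdy2 m)
    intro x hx
    rw [tendsto_order]
    constructor
    · intro a' ha'
      obtain ⟨k, m, hq1, hq2⟩ := ArchAux.dyadic_between ha'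
      have hxlt : x < pseudoInv φ _ := ArchAux.lt_pI hφ (ArchAux.mem_Icc_of_Ioc hx) hq2
      have hev := (tendsto_order.1 (hdyadic k m)).1 x hxlt
      filter_upwards [hev] with n hn
      have hne : {y | y ∈ Set.Icc (0:ℝ) 1 ∧
          ((k:ℝ≥0∞) + 1) * ((2:ℝ≥0∞)^m)⁻¹ ≤ φseq n y}.Nonempty := by
        by_contra h
        rw [Set.not_nonempty_iff_eq_empty] at h
        rw [pseudoInv, h, Real.sSup_empty] at hn
        exact absurd hn (not_lt.2 hx.1.le)
      obtain ⟨t, ht, hxt⟩ := exists_lt_of_lt_csSup hne hn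
      have hmono := ArchAux.anti (hφseq n) (ArchAux.mem_Icc_of_Ioc hx) ht.1 hxt.le
      exact lt_of_lt_of_le hq1 (le_trans ht.2 hmono)
    · intro a' ha'
      obtain ⟨k, m, hq1, hq2⟩ := ArchAux.dyadic_between ha'
      have hplt : pseudoInv φ _ < x := ArchAux.pI_lt hφ hx hq1
      have hev := (tendsto_order.1 (hdyadic k m)).2 x hplt
      filter_upwards [hev] with n hn
      refine lt_trans ?_ hq2
      by_contra h
      push_neg at h
      exact absurd (ArchAux.le_pI (ArchAux.mem_Icc_of_Ioc hx) h) (not_le.2 hn)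
  · -- generators converge ⇒ copulas converge
    intro H x hx y hy
    rcases eq_or_lt_of_le hx.1 with h0 | hx0
    · have e1 : ∀ n, archCopula (φseq n) x y = 0 := fun n => by
        rw [← h0]; exact ArchAux.arch_zero_left (hφseq n) y
      have e2 : archCopula φ x y = 0 := by
        rw [← h0]; exact ArchAux.arch_zero_left hφ y
      rw [e2]
      exact tendsto_const_nhds.congr fun n => (e1 n).symm
    rcases eq_or_lt_of_le hy.1 with h0 | hy0
    · have e1 : ∀ n, archCopula (φseq n) x y = 0 := fun n => by
        rw [← h0]; exact ArchAux.arch_zero_right (hφseq n) x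
      have e2 : archCopula φ x y = 0 := by
        rw [← h0]; exact ArchAux.arch_zero_right hφ x
      rw [e2]
      exact tendsto_const_nhds.congr fun n => (e1 n).symm
    · have hxI : x ∈ Set.Ioc (0:ℝ) 1 := ⟨hx0, hx.2⟩
      have hyI : y ∈ Set.Ioc (0:ℝ) 1 := ⟨hy0, hy.2⟩
      have hsq : Filter.Tendsto (fun n => φseq n x + φseq n y) Filter.atTop
          (nhds (φ x + φ y)) := (H x hxI).add (H y hyI)
      exact ArchAux.inv_conv hφ φseq hφseq H hsq
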